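/- Let {|φ_x^a⟩} be n mutually unbiased bases of ℂ^d and ρ a density matrix. Then (1/n) ∑_{x=0}^{n−1} max_a ⟨φ_x^a| ρ |φ_x^a⟩ ≤ (1/d)(1 + (d−1)/√n). -/

import Mathlib

open Matrix Finset Filter
open scoped ComplexOrder

noncomputable def expec {d : ℕ} (ρ : Matrix (Fin d) (Fin d) ℂ) (v : Fin d → ℂ) : ℝ :=
  Complex.re (dotProduct (star v) (ρ.mulVec v))

def IsDensity {d : ℕ} (ρ : Matrix (Fin d) (Fin d) ℂ) : Prop :=
  ρ.PosSemidef ∧ ρ.trace = 1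

def IsMUBFamily {d n : ℕ} (φ : Fin n → Fin d → Fin d → ℂ) : Prop :=
  (∀ x a b, dotProduct (star (φ x a)) (φ x b) = if a = b then 1 else 0) ∧
  (∀ x y a b, x ≠ y → ‖dotProduct (star (φ x a)) (φ y b)‖ = 1 / Real.sqrt d)

noncomputable def outer {d : ℕ} (v : Fin d → ℂ) : Matrix (Fin d) (Fin d) ℂ :=
  vecMulVec v (star v)

noncomputable def gibbs {d : ℕ} (β : ℝ) (H : Matrix (Fin d) (Fin d) ℂ) : Matrix (Fin d) (Fin d) ℂ :=
  (NormedSpace.exp ((-β : ℂ) • H)).trace⁻¹ • NormedSpace.exp ((-β : ℂ) • H)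

section HS
noncomputable def hsI {d : ℕ} (A B : Matrix (Fin d) (Fin d) ℂ) : ℂ :=
  ∑ i, ∑ j, (starRingEnd ℂ) (A i j) * B i j

variable {d : ℕ}

lemma hsI_sub_left (A B C : Matrix (Fin d) (Fin d) ℂ) :
    hsI (A - B) C = hsI A C - hsI B C := by
  simp [hsI, sub_mul, Finset.sum_sub_distrib]

lemma hsI_sub_right (A B C : Matrix (Fin d) (Fin d) ℂ) :
    hsI A (B - C) = hsI A B - hsI A C := by
  simp [hsI, mul_sub, Finset.sum_sub_distrib]

lemma hsI_smul_left (c : ℂ) (A B : Matrix (Fin d) (Fin d) ℂ) :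
    hsI (c • A) B = (starRingEnd ℂ) c * hsI A B := by
  simp [hsI, Finset.mul_sum, mul_assoc]

lemma hsI_smul_right (c : ℂ) (A B : Matrix (Fin d) (Fin d) ℂ) :
    hsI A (c • B) = c * hsI A B := by
  simp [hsI, Finset.mul_sum]; exact Finset.sum_congr rfl fun i _ => Finset.sum_congr rfl fun j _ => by ring

lemma hsI_add_right (A B C : Matrix (Fin d) (Fin d) ℂ) :
    hsI A (B + C) = hsI A B + hsI A C := by
  simp [hsI, mul_add, Finset.sum_add_distrib]

lemma hsI_add_left (A B C : Matrix (Fin d) (Fin d) ℂ) :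
    hsI (A + B) C = hsI A C + hsI B C := by
  simp [hsI, add_mul, Finset.sum_add_distrib]

lemma hsI_sum_right {ι : Type*} (s : Finset ι) (A : Matrix (Fin d) (Fin d) ℂ)
    (B : ι → Matrix (Fin d) (Fin d) ℂ) :
    hsI A (∑ x ∈ s, B x) = ∑ x ∈ s, hsI A (B x) := by
  classical
  induction s using Finset.induction with
  | empty => simp [hsI]
  | insert _ _ h ih => rw [Finset.sum_insert h, Finset.sum_insert h, hsI_add_right, ih]

lemma hsI_sum_left {ι : Type*} (s : Finset ι) (A : ι → Matrix (Fin d) (Fin d) ℂ)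
    (B : Matrix (Fin d) (Fin d) ℂ) :
    hsI (∑ x ∈ s, A x) B = ∑ x ∈ s, hsI (A x) B := by
  classical
  induction s using Finset.induction with
  | empty => simp [hsI]
  | insert _ _ h ih => rw [Finset.sum_insert h, Finset.sum_insert h, hsI_add_left, ih]

lemma hsI_one_right (A : Matrix (Fin d) (Fin d) ℂ) :
    hsI A 1 = (starRingEnd ℂ) A.trace := by
  simp [hsI, Matrix.one_apply, Matrix.trace, Matrix.diag, map_sum, mul_ite]

lemma hsI_one_left (A : Matrix (Fin d) (Fin d) ℂ) :
    hsI 1 A = A.trace := by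
  simp [hsI, Matrix.one_apply, Matrix.trace, Matrix.diag, ite_mul]

lemma hsI_one_one : (hsI (1 : Matrix (Fin d) (Fin d) ℂ) 1) = (d : ℂ) := by
  simp [hsI_one_right]

lemma hsI_outer_outer (u v : Fin d → ℂ) :
    hsI (outer u) (outer v) = (Complex.normSq (dotProduct (star u) v) : ℂ) := by
  have h : ∀ i j, (starRingEnd ℂ) (outer u i j) * outer v i j
      = ((starRingEnd ℂ) (u i) * v i) * (u j * (starRingEnd ℂ) (v j)) := by
    intro i j
    simp [outer, vecMulVec, _root_.map_mul, Pi.star_apply, Complex.star_def]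
    ring
  simp only [hsI, h]
  rw [← Finset.sum_mul_sum]
  have h1 : dotProduct (star u) v = ∑ i, (starRingEnd ℂ) (u i) * v i := by
    simp [dotProduct, Pi.star_apply, Complex.star_def]
  have h2 : (starRingEnd ℂ) (dotProduct (star u) v) = ∑ j, u j * (starRingEnd ℂ) (v j) := by
    rw [h1, map_sum]; exact Finset.sum_congr rfl fun j _ => by rw [_root_.map_mul, Complex.conj_conj]
  rw [← h1, ← h2, Complex.mul_conj]


lemma hsI_herm_outer {M : Matrix (Fin d) (Fin d) ℂ} (hM : M.IsHermitian) (v : Fin d → ℂ) :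
    hsI M (outer v) = dotProduct (star v) (M.mulVec v) := by
  have h : ∀ i j, (starRingEnd ℂ) (M i j) * outer v i j
      = ((starRingEnd ℂ) (v j)) * (M j i * v i) := by
    intro i j
    have hc : (starRingEnd ℂ) (M i j) = M j i := by
      have := hM.apply j i
      simpa [Complex.star_def] using this
    simp only [outer, vecMulVec, Matrix.of_apply, Pi.star_apply, Complex.star_def, hc]
    ring
  simp only [hsI, h]
  rw [Finset.sum_comm]
  simp [dotProduct, Matrix.mulVec, Finset.mul_sum, Pi.star_apply, Complex.star_def]

lemma trace_outer (v : Fin d → ℂ) : (outer v).trace = dotProduct (star v) v := by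
  simp [outer, vecMulVec, Matrix.trace, Matrix.diag, dotProduct, Pi.star_apply, mul_comm]

lemma hsI_self_re (A : Matrix (Fin d) (Fin d) ℂ) :
    (hsI A A).re = ∑ i, ∑ j, ‖A i j‖ ^ 2 := by
  have h : ∀ i j : Fin d, (starRingEnd ℂ) (A i j) * A i j = (Complex.normSq (A i j) : ℂ) := by
    intro i j; rw [mul_comm, Complex.mul_conj]
  simp only [hsI, h]
  rw [Complex.re_sum]
  congr 1; ext i
  rw [Complex.re_sum]
  congr 1; ext j
  simp [Complex.sq_norm]

lemma hsI_cauchy_schwarz (A B : Matrix (Fin d) (Fin d) ℂ) :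
    (hsI A B).re ≤ Real.sqrt ((hsI A A).re) * Real.sqrt ((hsI B B).re) := by
  have hAB : hsI A B = ∑ p : Fin d × Fin d, (starRingEnd ℂ) (A p.1 p.2) * B p.1 p.2 := by
    rw [Fintype.sum_prod_type]; rfl
  have h1 : (hsI A B).re ≤ ‖hsI A B‖ := Complex.re_le_norm _
  have h2 : ‖hsI A B‖ ≤
      ∑ p : Fin d × Fin d, ‖A p.1 p.2‖ * ‖B p.1 p.2‖ := by
    rw [hAB]
    refine (norm_sum_le _ _).trans_eq ?_
    refine Finset.sum_congr rfl fun p _ => ?_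
    rw [norm_mul, Complex.norm_conj]
  have h3 := Real.sum_mul_le_sqrt_mul_sqrt (Finset.univ : Finset (Fin d × Fin d))
    (fun p => ‖A p.1 p.2‖) (fun p => ‖B p.1 p.2‖)
  have hA : ∑ p : Fin d × Fin d, ‖A p.1 p.2‖ ^ 2 = (hsI A A).re := by
    rw [hsI_self_re, Fintype.sum_prod_type]
  have hB : ∑ p : Fin d × Fin d, ‖B p.1 p.2‖ ^ 2 = (hsI B B).re := by
    rw [hsI_self_re, Fintype.sum_prod_type]
  rw [hA, hB] at h3
  exact h1.trans (h2.trans h3)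

lemma hsI_self_eq_trace_sq {M : Matrix (Fin d) (Fin d) ℂ} (hM : M.IsHermitian) :
    hsI M M = (M * M).trace := by
  simp only [hsI]
  have h : ∀ i j, (starRingEnd ℂ) (M i j) * M i j = M j i * M i j := by
    intro i j
    have hc : (starRingEnd ℂ) (M i j) = M j i := by
      have := hM.apply j i
      simpa [Complex.star_def] using this
    rw [hc]
  simp only [h]
  rw [Finset.sum_comm]
  simp [Matrix.trace, Matrix.diag, Matrix.mul_apply]

lemma trace_sq_le_one {ρ : Matrix (Fin d) (Fin d) ℂ} (hpsd : ρ.PosSemidef)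
    (ht : ρ.trace = 1) : ((ρ * ρ).trace).re ≤ 1 := by
  classical
  have hH : ρ.IsHermitian := hpsd.1
  set U : Matrix (Fin d) (Fin d) ℂ :=
    (Matrix.IsHermitian.eigenvectorUnitary hH : Matrix (Fin d) (Fin d) ℂ) with hUdef
  set D : Matrix (Fin d) (Fin d) ℂ :=
    Matrix.diagonal (RCLike.ofReal ∘ hH.eigenvalues) with hDdef
  have hs : ρ = U * D * star U := hH.spectral_theorem
  have hU : star U * U = 1 :=
    Matrix.mem_unitaryGroup_iff'.mp (Matrix.IsHermitian.eigenvectorUnitary hH).2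
  have hDD : ρ * ρ = U * (D * D) * star U := by
    rw [hs]
    simp only [Matrix.mul_assoc]
    rw [← Matrix.mul_assoc (star U) U (D * star U), hU, Matrix.one_mul]
  have h1 : (ρ * ρ).trace = ∑ i, ((hH.eigenvalues i : ℝ) : ℂ) ^ 2 := by
    rw [hDD, Matrix.trace_mul_cycle, hU, Matrix.one_mul, hDdef,
      Matrix.diagonal_mul_diagonal, Matrix.trace_diagonal]
    refine Finset.sum_congr rfl fun i _ => ?_
    simp [Function.comp, sq]
  have h2 : (1 : ℂ) = ∑ i, ((hH.eigenvalues i : ℝ) : ℂ) := by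
    calc (1 : ℂ) = ρ.trace := ht.symm
    _ = (U * D * star U).trace := by rw [← hs]
    _ = D.trace := by rw [Matrix.trace_mul_cycle, hU, Matrix.one_mul]
    _ = ∑ i, ((hH.eigenvalues i : ℝ) : ℂ) := by
        rw [hDdef, Matrix.trace_diagonal]; rfl
  have h2' : ∑ i, hH.eigenvalues i = 1 := by
    have := congrArg Complex.re h2
    rw [Complex.re_sum] at this
    simpa using this.symm
  have h3 : ∑ i, hH.eigenvalues i ^ 2 ≤ 1 := by
    have := Finset.sum_sq_le_sq_sum_of_nonneg
      (f := hH.eigenvalues) (s := Finset.univ) (fun i _ => hpsd.eigenvalues_nonneg i)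
    rw [h2'] at this
    simpa using this
  have h4 : ((ρ * ρ).trace).re = ∑ i, hH.eigenvalues i ^ 2 := by
    rw [h1, Complex.re_sum]
    refine Finset.sum_congr rfl fun i _ => ?_
    rw [← Complex.ofReal_pow, Complex.ofReal_re]
  rw [h4]
  exact h3

end HS

/-- Per-basis-maximum MUB overlap bound. -/
theorem mub_max_overlap_bound {d n : ℕ} (hd : 1 ≤ d) (hn : 1 ≤ n)
    (φ : Fin n → Fin d → Fin d → ℂ) (hφ : IsMUBFamily φ)
    (ρ : Matrix (Fin d) (Fin d) ℂ) (hρ : IsDensity ρ) :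
    (1 / (n : ℝ)) * ∑ x, Finset.univ.sup' ⟨⟨0, hd⟩, Finset.mem_univ _⟩
        (fun a => expec ρ (φ x a)) ≤
      (1 / (d : ℝ)) * (1 + ((d : ℝ) - 1) / Real.sqrt n) := by
  classical
  obtain ⟨horth, hcross⟩ := hφ
  have hpsd := hρ.1
  have hHerm : ρ.IsHermitian := hpsd.1
  have htr : ρ.trace = 1 := hρ.2
  have hd0 : (0 : ℝ) < (d : ℝ) := by exact_mod_cast hd
  have hn0 : (0 : ℝ) < (n : ℝ) := by exact_mod_cast hn
  have hdC : ((d : ℂ)) ≠ 0 := by exact_mod_cast hd0.ne'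
  -- choose the maximizing outcome in each basis
  have hch : ∀ x : Fin n, ∃ i, i ∈ (Finset.univ : Finset (Fin d)) ∧
      Finset.univ.sup' ⟨⟨0, hd⟩, Finset.mem_univ _⟩ (fun a => expec ρ (φ x a))
        = expec ρ (φ x i) :=
    fun x => Finset.exists_mem_eq_sup' _ _
  choose a _ ha using hch
  set v : Fin n → Fin d → ℂ := fun x => φ x (a x) with hv
  set P : Fin n → Matrix (Fin d) (Fin d) ℂ := fun x => outer (v x) with hPdef
  set c : ℂ := (((d : ℝ)⁻¹ : ℝ) : ℂ) with hcdef
  have hcc : (starRingEnd ℂ) c = c := Complex.conj_ofReal _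
  have hcd : c * (d : ℂ) = 1 := by
    rw [hcdef]
    rw [show ((d : ℂ)) = (((d : ℝ) : ℂ)) by push_cast; ring]
    rw [← Complex.ofReal_mul, inv_mul_cancel₀ hd0.ne']
    simp
  -- inner products between projectors
  have hnorm : ∀ x, dotProduct (star (v x)) (v x) = 1 := by
    intro x; rw [hv]; simpa using horth x (a x) (a x)
  have hPtr : ∀ x, (P x).trace = 1 := by
    intro x; rw [hPdef, trace_outer, hnorm]
  have hPP : ∀ x y, hsI (P x) (P y) = if x = y then 1 else c := by
    intro x y
    rw [hPdef, hsI_outer_outer]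
    by_cases h : x = y
    · subst h; rw [if_pos rfl, hnorm]; simp
    · rw [if_neg h]
      have habs : ‖dotProduct (star (v x)) (v y)‖ = 1 / Real.sqrt d :=
        hcross x y (a x) (a y) h
      rw [Complex.normSq_eq_norm_sq, habs, hcdef]
      norm_cast
      rw [div_pow, one_pow, Real.sq_sqrt (le_of_lt hd0)]
      rw [one_div]
  have hρP : ∀ x, (hsI ρ (P x)).re = expec ρ (v x) := by
    intro x; rw [hPdef, hsI_herm_outer hHerm]; rfl
  -- the mean-zero decomposition
  set A : Matrix (Fin d) (Fin d) ℂ := ρ - c • 1 with hAdef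
  set M : Fin n → Matrix (Fin d) (Fin d) ℂ := fun x => P x - c • 1 with hMdef
  set B : Matrix (Fin d) (Fin d) ℂ := ∑ x, M x with hBdef
  have key : ∀ X Y : Matrix (Fin d) (Fin d) ℂ, X.trace = 1 → Y.trace = 1 →
      hsI (X - c • 1) (Y - c • 1) = hsI X Y - c := by
    intro X Y hX hY
    simp only [hsI_sub_left, hsI_sub_right, hsI_smul_left, hsI_smul_right]
    simp only [hsI_one_right, hsI_one_left, hsI_one_one, hX, hY, hcc, _root_.map_one,
      Matrix.trace_one, Fintype.card_fin, map_natCast]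
    linear_combination c * hcd
  have hAM : ∀ x, hsI A (M x) = hsI ρ (P x) - c := fun x => key ρ (P x) htr (hPtr x)
  have hAA : hsI A A = hsI ρ ρ - c := key ρ ρ htr htr
  have hMM : ∀ x y, hsI (M x) (M y) = hsI (P x) (P y) - c :=
    fun x y => key (P x) (P y) (hPtr x) (hPtr y)
  set S : ℝ := ∑ x, expec ρ (v x) with hSdef
  -- ⟪A,B⟫
  have hreAB : (hsI A B).re = S - (n : ℝ) * (d : ℝ)⁻¹ := by
    rw [hBdef, hsI_sum_right]
    rw [Complex.re_sum]
    have : ∀ x ∈ (Finset.univ : Finset (Fin n)),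
        (hsI A (M x)).re = expec ρ (v x) - (d : ℝ)⁻¹ := by
      intro x _
      rw [hAM x, Complex.sub_re, hρP x, hcdef, Complex.ofReal_re]
    rw [Finset.sum_congr rfl this, Finset.sum_sub_distrib, hSdef]
    simp [mul_comm]
  -- ⟪A,A⟫ bound
  have hAAre : (hsI A A).re ≤ 1 - (d : ℝ)⁻¹ := by
    rw [hAA, Complex.sub_re, hcdef, Complex.ofReal_re]
    have h1 : (hsI ρ ρ).re ≤ 1 := by
      rw [hsI_self_eq_trace_sq hHerm]
      exact trace_sq_le_one hpsd htr
    linarith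
  -- ⟪B,B⟫ value
  have hBBre : (hsI B B).re = (n : ℝ) * (1 - (d : ℝ)⁻¹) := by
    have hBB : hsI B B = (n : ℂ) * (1 - c) := by
      rw [hBdef, hsI_sum_left]
      have : ∀ x ∈ (Finset.univ : Finset (Fin n)),
          hsI (M x) (∑ y, M y) = 1 - c := by
        intro x _
        rw [hsI_sum_right]
        have h2 : ∀ y ∈ (Finset.univ : Finset (Fin n)),
            hsI (M x) (M y) = if x = y then 1 - c else 0 := by
          intro y _
          rw [hMM x y, hPP x y]
          by_cases h : x = y <;> simp [h]
        rw [Finset.sum_congr rfl h2, Finset.sum_ite_eq Finset.univ x (fun _ => (1 : ℂ) - c)]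
        simp
      rw [Finset.sum_congr rfl this]
      simp [mul_comm]
      ring
    rw [hBB, hcdef]
    have : ((n : ℂ)) * (1 - (((d : ℝ)⁻¹ : ℝ) : ℂ)) = (((n : ℝ) * (1 - (d : ℝ)⁻¹) : ℝ) : ℂ) := by
      push_cast; ring
    rw [this, Complex.ofReal_re]
  -- Cauchy–Schwarz
  have hcs := hsI_cauchy_schwarz A B
  have h1d : (0 : ℝ) ≤ 1 - (d : ℝ)⁻¹ := by
    have : (d : ℝ)⁻¹ ≤ 1 := by
      rw [inv_le_one_iff₀]; right; exact_mod_cast hd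
    linarith
  have hs1 : Real.sqrt ((hsI A A).re) ≤ Real.sqrt (1 - (d : ℝ)⁻¹) :=
    Real.sqrt_le_sqrt hAAre
  have hs2 : Real.sqrt ((hsI B B).re) = Real.sqrt n * Real.sqrt (1 - (d : ℝ)⁻¹) := by
    rw [hBBre, Real.sqrt_mul (le_of_lt hn0)]
  have hmain : S - (n : ℝ) * (d : ℝ)⁻¹ ≤ Real.sqrt n * (1 - (d : ℝ)⁻¹) := by
    have h4 : (hsI A B).re ≤ Real.sqrt (1 - (d : ℝ)⁻¹) * (Real.sqrt n * Real.sqrt (1 - (d : ℝ)⁻¹)) := by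
      refine hcs.trans ?_
      rw [hs2]
      exact mul_le_mul_of_nonneg_right hs1 (by positivity)
    rw [hreAB] at h4
    calc S - (n : ℝ) * (d : ℝ)⁻¹
        ≤ Real.sqrt (1 - (d : ℝ)⁻¹) * (Real.sqrt n * Real.sqrt (1 - (d : ℝ)⁻¹)) := h4
      _ = Real.sqrt n * (Real.sqrt (1 - (d : ℝ)⁻¹) * Real.sqrt (1 - (d : ℝ)⁻¹)) := by ring
      _ = Real.sqrt n * (1 - (d : ℝ)⁻¹) := by rw [Real.mul_self_sqrt h1d]
  -- rewrite the goal sum as S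
  have hgoal : ∑ x, Finset.univ.sup' ⟨⟨0, hd⟩, Finset.mem_univ _⟩
      (fun a => expec ρ (φ x a)) = S := by
    rw [hSdef]
    exact Finset.sum_congr rfl fun x _ => ha x
  rw [hgoal]
  -- final arithmetic
  have hS : S ≤ (n : ℝ) * (d : ℝ)⁻¹ + Real.sqrt n * (1 - (d : ℝ)⁻¹) := by linarith
  have hsqrtn : (0 : ℝ) < Real.sqrt n := Real.sqrt_pos.mpr hn0
  have hnn : Real.sqrt n * Real.sqrt n = (n : ℝ) := Real.mul_self_sqrt (le_of_lt hn0)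
  have heq : (1 / (n : ℝ)) * ((n : ℝ) * (d : ℝ)⁻¹ + Real.sqrt n * (1 - (d : ℝ)⁻¹))
      = (1 / (d : ℝ)) * (1 + ((d : ℝ) - 1) / Real.sqrt n) := by
    field_simp
    linear_combination ((d : ℝ) - 1) * hnn
  calc (1 / (n : ℝ)) * S
      ≤ (1 / (n : ℝ)) * ((n : ℝ) * (d : ℝ)⁻¹ + Real.sqrt n * (1 - (d : ℝ)⁻¹)) := by
        exact mul_le_mul_of_nonneg_left hS (by positivity)
    _ = (1 / (d : ℝ)) * (1 + ((d : ℝ) - 1) / Real.sqrt n) := heq
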